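/- Suppose all Verblunsky coefficients α_n are real with −1 < α_n < 1 and α_n → L with L ∈ (−1, 0). Then lim_{n→∞} K_{n−1}(1,1)/φ_n(1)² = −(1+L)/(2L), where K_{n−1}(1,1) = Σ_{j=0}^{n−1} φ_j(1)². In particular, since φ_n(1) → ∞ exponentially, K_n(1,1) → ∞ and the point 1 carries no mass. -/

import Mathlib

open Filter Finset

noncomputable def szegoPhiOne (α : ℕ → ℝ) : ℕ → ℝ × ℝ
  | 0 => (1, 1)
  | n + 1 =>
      (Real.sqrt (1 - α n ^ 2))⁻¹ •
        ((szegoPhiOne α n).1 - α n * (szegoPhiOne α n).2,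
         (szegoPhiOne α n).2 - α n * (szegoPhiOne α n).1)

lemma szego_snd_eq_fst (α : ℕ → ℝ) : ∀ n, (szegoPhiOne α n).2 = (szegoPhiOne α n).1 := by
  intro n
  induction n with
  | zero => simp [szegoPhiOne]
  | succ n ih => simp [szegoPhiOne, ih]

lemma szego_sq_succ (α : ℕ → ℝ) (hα : ∀ n, |α n| < 1) (n : ℕ) :
    (szegoPhiOne α (n+1)).1 ^ 2 = (1 - α n) / (1 + α n) * (szegoPhiOne α n).1 ^ 2 := by
  have h1 : -1 < α n := (abs_lt.1 (hα n)).1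
  have h2 : α n < 1 := (abs_lt.1 (hα n)).2
  have hs : (0:ℝ) ≤ 1 - α n ^ 2 := by nlinarith
  have hfst : (szegoPhiOne α (n+1)).1
      = (Real.sqrt (1 - α n ^ 2))⁻¹ * ((1 - α n) * (szegoPhiOne α n).1) := by
    simp only [szegoPhiOne, Prod.smul_fst, smul_eq_mul, szego_snd_eq_fst]
    ring
  rw [hfst]
  have hsq : (Real.sqrt (1 - α n ^ 2))⁻¹ ^ 2 = (1 - α n ^ 2)⁻¹ := by
    rw [inv_pow, Real.sq_sqrt hs]
  have hne1 : (1:ℝ) + α n ≠ 0 := by linarith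
  have hne2 : (1:ℝ) - α n ≠ 0 := by linarith
  rw [mul_pow, hsq, mul_pow]
  have : (1 - α n ^ 2) = (1 - α n) * (1 + α n) := by ring
  rw [this]
  field_simp

lemma szego_sq_pos (α : ℕ → ℝ) (hα : ∀ n, |α n| < 1) (n : ℕ) :
    0 < (szegoPhiOne α n).1 ^ 2 := by
  induction n with
  | zero => norm_num [szegoPhiOne]
  | succ n ih =>
    rw [szego_sq_succ α hα]
    have h1 : -1 < α n := (abs_lt.1 (hα n)).1
    have h2 : α n < 1 := (abs_lt.1 (hα n)).2
    have : 0 < (1 - α n) / (1 + α n) := div_pos (by linarith) (by linarith)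
    exact mul_pos this ih

lemma tendsto_zero_of_contract (e δ : ℕ → ℝ) (q : ℝ) (hq0 : 0 ≤ q) (hq1 : q < 1)
    (he : ∀ n, 0 ≤ e n)
    (hrec : ∀ᶠ n in atTop, e (n+1) ≤ q * e n + δ n)
    (hδ : Tendsto δ atTop (nhds 0)) : Tendsto e atTop (nhds 0) := by
  rw [Metric.tendsto_atTop]
  intro ε hε
  have hε4 : 0 < (1 - q) * ε / 4 := by
    have : 0 < 1 - q := by linarith
    positivity
  obtain ⟨N₁, hN₁⟩ := eventually_atTop.1 hrec
  obtain ⟨N₂, hN₂⟩ := (Metric.tendsto_atTop.1 hδ) ((1 - q) * ε / 4) hε4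
  set N := max N₁ N₂ with hN
  have hδle : ∀ n ≥ N, δ n ≤ (1 - q) * ε / 4 := by
    intro n hn
    have := hN₂ n (le_trans (le_max_right _ _) hn)
    rw [Real.dist_eq, sub_zero] at this
    exact le_of_lt (lt_of_abs_lt this)
  have key : ∀ k, e (N + k) ≤ q ^ k * e N + ε / 4 := by
    intro k
    induction k with
    | zero => simp; linarith
    | succ k ih =>
      have h1 : e (N + k + 1) ≤ q * e (N + k) + δ (N + k) :=
        hN₁ (N + k) (le_trans (le_max_left _ _) (Nat.le_add_right _ _))
      have h2 : δ (N + k) ≤ (1 - q) * ε / 4 := hδle _ (Nat.le_add_right _ _)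
      have h3 : q * e (N + k) ≤ q * (q ^ k * e N + ε / 4) :=
        mul_le_mul_of_nonneg_left ih hq0
      have : e (N + (k + 1)) = e (N + k + 1) := by ring_nf
      rw [this]
      calc e (N + k + 1) ≤ q * (q ^ k * e N + ε / 4) + (1 - q) * ε / 4 := by linarith
        _ = q ^ (k + 1) * e N + ε / 4 := by rw [pow_succ]; ring
  have hpow : Tendsto (fun k => q ^ k * e N + ε / 4) atTop (nhds (0 * e N + ε / 4)) := by
    exact ((tendsto_pow_atTop_nhds_zero_of_lt_one hq0 hq1).mul_const _).add_const _
  rw [zero_mul, zero_add] at hpow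
  have hev : ∀ᶠ k in atTop, q ^ k * e N + ε / 4 < ε :=
    hpow.eventually_lt_const (by linarith)
  obtain ⟨K, hK⟩ := eventually_atTop.1 hev
  refine ⟨N + K, fun n hn => ?_⟩
  have hnN : N ≤ n := le_trans (Nat.le_add_right _ _) hn
  have : n = N + (n - N) := by omega
  rw [Real.dist_eq, sub_zero, abs_of_nonneg (he n)]
  calc e n = e (N + (n - N)) := by rw [← this]
    _ ≤ q ^ (n - N) * e N + ε / 4 := key _
    _ < ε := hK _ (by omega)

/-- For real Verblunsky coefficients with `αₙ → L ∈ (-1,0)`: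
`K_{n-1}(1,1)/φ_n(1)² → -(1+L)/(2L)`, and `K_n(1,1) → ∞` (the point `1` carries no mass). -/
theorem kernel_over_phi_sq_limit
    (α : ℕ → ℝ) (hα : ∀ n, |α n| < 1)
    (L : ℝ) (hL : L ∈ Set.Ioo (-1 : ℝ) 0) (hlim : Tendsto α atTop (nhds L)) :
    Tendsto
      (fun n => (∑ j ∈ Finset.range n, (szegoPhiOne α j).1 ^ 2) / (szegoPhiOne α n).1 ^ 2)
      atTop (nhds (-(1 + L) / (2 * L))) ∧
    Tendsto (fun n => ∑ j ∈ Finset.range (n + 1), (szegoPhiOne α j).1 ^ 2) atTop atTop := by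
  obtain ⟨hL1, hL0⟩ := hL
  have hL1' : (0:ℝ) < 1 + L := by linarith
  set P : ℕ → ℝ := fun n => (szegoPhiOne α n).1 ^ 2 with hPdef
  set S : ℕ → ℝ := fun n => ∑ j ∈ Finset.range n, P j with hSdef
  set r : ℕ → ℝ := fun n => (1 - α n) / (1 + α n) with hrdef
  set x : ℕ → ℝ := fun n => S n / P n with hxdef
  have hP : ∀ n, 0 < P n := szego_sq_pos α hα
  have hPs : ∀ n, P (n+1) = r n * P n := szego_sq_succ α hα
  have hr : ∀ n, 0 < r n := by
    intro n
    have h1 : -1 < α n := (abs_lt.1 (hα n)).1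
    have h2 : α n < 1 := (abs_lt.1 (hα n)).2
    exact div_pos (by linarith) (by linarith)
  set R : ℝ := (1 - L) / (1 + L) with hRdef
  have hR1 : 1 < R := by
    rw [hRdef, lt_div_iff₀ hL1']
    linarith
  have hrlim : Tendsto r atTop (nhds R) := by
    apply Tendsto.div
    · exact tendsto_const_nhds.sub hlim
    · exact tendsto_const_nhds.add hlim
    · linarith
  set xs : ℝ := 1 / (R - 1) with hxsdef
  have hR1' : (0:ℝ) < R - 1 := by linarith
  have hxs_pos : 0 < xs := by
    rw [hxsdef]; positivity
  have hxsR : xs * (R - 1) = 1 := by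
    rw [hxsdef, one_div, inv_mul_cancel₀ hR1'.ne']
  have hSsucc : ∀ n, S (n+1) = S n + P n := by
    intro n; simp [hSdef, Finset.sum_range_succ]
  have hx : ∀ n, x (n+1) = (x n + 1) / r n := by
    intro n
    have hPn := (hP n).ne'
    have hPn1 := (hP (n+1)).ne'
    have hrn := (hr n).ne'
    have h1 : x n + 1 = (S n + P n) / P n := by
      rw [hxdef]; field_simp
    rw [h1, div_div, hxdef]
    simp only
    rw [hSsucc n, hPs n, mul_comm (P n) (r n)]
  -- error recursion
  have key : ∀ n, x (n+1) - xs = (x n - xs) / r n + xs * (R - r n) / r n := by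
    intro n
    rw [hx n]
    have hrn := (hr n).ne'
    field_simp
    nlinarith [hxsR]
  set e : ℕ → ℝ := fun n => |x n - xs| with hedef
  set c : ℝ := (1 + R) / 2 with hcdef
  have hc1 : 1 < c := by rw [hcdef]; linarith
  have hrc : ∀ᶠ n in atTop, c ≤ r n := by
    have : ∀ᶠ n in atTop, r n ∈ Set.Ioi c := by
      apply hrlim.eventually
      exact Ioi_mem_nhds (by rw [hcdef]; linarith)
    filter_upwards [this] with n hn using le_of_lt hn
  set q : ℝ := 1 / c with hqdef
  have hq0 : 0 ≤ q := by rw [hqdef]; positivity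
  have hq1 : q < 1 := by
    rw [hqdef, div_lt_one (by linarith)]; exact hc1
  set δ : ℕ → ℝ := fun n => xs * |R - r n| with hδdef
  have hδlim : Tendsto δ atTop (nhds 0) := by
    have h1 : Tendsto (fun n => R - r n) atTop (nhds (R - R)) :=
      tendsto_const_nhds.sub hrlim
    rw [sub_self] at h1
    have h2 : Tendsto (fun n => |R - r n|) atTop (nhds (|0|)) := h1.abs
    rw [abs_zero] at h2
    have := h2.const_mul xs
    simpa using this
  have hrec : ∀ᶠ n in atTop, e (n+1) ≤ q * e n + δ n := by
    filter_upwards [hrc] with n hn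
    have hrn : 0 < r n := hr n
    have ha1 : |(x n - xs) / r n| = |x n - xs| / r n := by
      rw [abs_div, abs_of_pos hrn]
    have ha2 : |xs * (R - r n) / r n| = xs * |R - r n| / r n := by
      rw [abs_div, abs_mul, abs_of_pos hxs_pos, abs_of_pos hrn]
    have h1 : e (n+1) ≤ |x n - xs| / r n + xs * |R - r n| / r n := by
      rw [hedef]
      simp only
      rw [key n]
      calc |(x n - xs) / r n + xs * (R - r n) / r n|
          ≤ |(x n - xs) / r n| + |xs * (R - r n) / r n| := abs_add_le _ _
        _ = |x n - xs| / r n + xs * |R - r n| / r n := by rw [ha1, ha2]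
    have h2 : |x n - xs| / r n ≤ q * e n := by
      rw [hqdef, one_div_mul_eq_div, hedef]
      exact div_le_div_of_nonneg_left (abs_nonneg _) (by linarith) hn
    have h3 : xs * |R - r n| / r n ≤ δ n := by
      rw [hδdef]
      exact div_le_self (by positivity) (by linarith)
    calc e (n+1) ≤ |x n - xs| / r n + xs * |R - r n| / r n := h1
      _ ≤ q * e n + δ n := add_le_add h2 h3
  have he0 : ∀ n, 0 ≤ e n := fun n => abs_nonneg _
  have hezero : Tendsto e atTop (nhds 0) :=
    tendsto_zero_of_contract e δ q hq0 hq1 he0 hrec hδlim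
  have hxlim : Tendsto x atTop (nhds xs) := by
    rw [tendsto_iff_dist_tendsto_zero]
    have : (fun n => dist (x n) xs) = e := by
      funext n; rw [Real.dist_eq, hedef]
    rw [this]
    exact hezero
  have hxs_eq : xs = -(1 + L) / (2 * L) := by
    rw [hxsdef, hRdef]
    rw [div_eq_div_iff (by linarith) (by nlinarith)]
    field_simp
    ring
  constructor
  · rw [← hxs_eq]
    exact hxlim
  · -- P tends to atTop
    obtain ⟨N, hN⟩ := eventually_atTop.1 hrc
    have hPtop : Tendsto P atTop atTop := by
      rw [← tendsto_add_atTop_iff_nat N]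
      apply tendsto_atTop_of_geom_le (v := fun n => P (n + N)) (c := c)
      · exact hP N |>.trans_eq (by simp)
      · exact hc1
      · intro n
        have h1 : P (n + N + 1) = r (n + N) * P (n + N) := hPs (n + N)
        have h2 : c ≤ r (n + N) := hN _ (Nat.le_add_left _ _)
        have h3 : 0 < P (n + N) := hP _
        calc c * P (n + N) ≤ r (n + N) * P (n + N) :=
              mul_le_mul_of_nonneg_right h2 h3.le
          _ = P (n + N + 1) := h1.symm
          _ = P (n + 1 + N) := by rw [Nat.add_right_comm]
    have hStop : Tendsto S atTop atTop := by
      have hSx : S = fun n => x n * P n := by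
        funext n
        rw [hxdef]
        simp only
        rw [div_mul_cancel₀ _ (hP n).ne']
      rw [hSx]
      exact hxlim.pos_mul_atTop hxs_pos hPtop
    exact (tendsto_add_atTop_iff_nat 1).2 hStop
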